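/- Let (A, ⋆) be a nontrivial finite group and 𝒜 = M(B_k(A), χ_k(A)) the Mealy automaton obtained from the De Bruijn automaton of order k with the coloring sending ys →^x sx to output x ⋆ y^{-1}. Then 𝒜 is an invertible reset Mealy automaton with pairwise distinct modified state functions; in particular, for distinct states q ≠ q' in A^k and any v ∈ A^k, one has q ∘ v ≠ q' ∘ v, and the semigroup S(𝒜) generated by {𝒜_q : q ∈ A^k} is free. -/

import Mathlib

set_option linter.unusedSectionVars false
set_option linter.unnecessarySimpa false


/-- The action of a DFA transition function on words. -/
def dfaRun {Q A : Type*} (δ : Q → A → Q) (q : Q) (u : List A) : Q := u.foldl δ q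

/-- The sequential transformation of `A*` induced by a state of a Mealy automaton. -/
def mealyMap {Q A : Type*} (δ : Q → A → Q) (lam : Q → A → A) : Q → List A → List A
  | _, [] => []
  | q, a :: u => lam q a :: mealyMap δ lam (δ q a) u

/-- The set of synchronizing (reset) words of the underlying DFA. -/
def synSet {Q A : Type*} [Fintype Q] [DecidableEq Q] (δ : Q → A → Q) : Set (List A) :=
  {u | (Finset.univ.image fun q => dfaRun δ q u).card = 1}

/-- The transition function of the De Bruijn automaton of order `k`. -/
def dbStep (A : Type*) (k : ℕ) (q : Fin k → A) (x : A) : Fin k → A :=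
  fun i => if h : (i : ℕ) + 1 < k then q ⟨(i : ℕ) + 1, h⟩ else x

/-- The output function of the group coloring `χ_k(A)`. -/
def dbOut {A : Type*} [Group A] (k : ℕ) [NeZero k] (q : Fin k → A) (x : A) : A :=
  x * (q 0)⁻¹

namespace Stmt16Aux

variable {A : Type*} [Group A] {k : ℕ} [NeZero k]

lemma kpos : 0 < k := Nat.pos_of_ne_zero (NeZero.ne k)

lemma getD_append (l₁ l₂ : List A) (j : ℕ) (d : A) :
    (l₁ ++ l₂).getD j d = if j < l₁.length then l₁.getD j d else l₂.getD (j - l₁.length) d := by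
  simp only [List.getD_eq_getElem?_getD, List.getElem?_append]
  split <;> rfl

lemma getD_ofFn {n : ℕ} (f : Fin n → A) (j : ℕ) (h : j < n) (d : A) :
    (List.ofFn f).getD j d = f ⟨j, h⟩ := by
  rw [List.getD_eq_getElem (_) _ (by simpa using h), List.getElem_ofFn]

lemma ofFn_dbStep (q : Fin k → A) (x : A) :
    List.ofFn (dbStep A k q x) = (List.ofFn q).drop 1 ++ [x] := by
  apply List.ext_getElem
  · simp [Nat.sub_add_cancel (kpos (k := k))]
  · intro n h1 h2
    simp only [List.length_ofFn] at h1
    rw [List.getElem_ofFn]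
    by_cases h : n + 1 < k
    · rw [List.getElem_append_left (by simp; omega)]
      simp [dbStep, h]
    · have hn : n = k - 1 := by omega
      rw [List.getElem_append_right (by simp; omega)]
      simp [dbStep, h]

lemma ofFn_dbStep_append (q : Fin k → A) (x : A) (u : List A) :
    List.ofFn (dbStep A k q x) ++ u = (List.ofFn q ++ x :: u).drop 1 := by
  rw [ofFn_dbStep, List.drop_append]
  simp [Nat.sub_eq_zero_of_le (kpos (k := k))]

lemma dfaRun_eq (q : Fin k → A) (u : List A) :
    dfaRun (dbStep A k) q u = fun i : Fin k => (List.ofFn q ++ u).getD (u.length + (i : ℕ)) 1 := by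
  induction u generalizing q with
  | nil =>
    funext i
    simp only [List.append_nil, List.length_nil, Nat.zero_add]
    rw [getD_ofFn q (i : ℕ) i.2 1]
    rfl
  | cons x u ih =>
    show dfaRun (dbStep A k) (dbStep A k q x) u = _
    rw [ih]
    funext i
    rw [ofFn_dbStep_append]
    simp only [List.getD_eq_getElem?_getD, List.getElem?_drop, List.length_cons]
    congr 2
    omega

lemma mealyMap_eq (q : Fin k → A) (u : List A) :
    mealyMap (dbStep A k) (dbOut k) q u =
      List.ofFn (fun j : Fin u.length =>
        u.getD (j : ℕ) 1 * ((List.ofFn q ++ u).getD (j : ℕ) 1)⁻¹) := by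
  induction u generalizing q with
  | nil => rfl
  | cons x u ih =>
    show dbOut k q x :: mealyMap (dbStep A k) (dbOut k) (dbStep A k q x) u = _
    rw [ih, List.length_cons, List.ofFn_succ]
    congr 1
    · simp only [Fin.val_zero, List.getD_cons_zero]
      rw [getD_append]
      simp only [List.length_ofFn, kpos (k := k), if_pos]
      rw [getD_ofFn q 0 (kpos (k := k)) 1]
      rfl
    · congr 1
      funext j
      simp only [Fin.val_succ, List.getD_cons_succ]
      rw [ofFn_dbStep_append]
      simp only [List.getD_eq_getElem?_getD, List.getElem?_drop]
      rw [Nat.add_comm]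

lemma mealyMap_length (q : Fin k → A) (u : List A) :
    (mealyMap (dbStep A k) (dbOut k) q u).length = u.length := by
  rw [mealyMap_eq]; simp

lemma mealyMap_getD (q : Fin k → A) (u : List A) (j : ℕ) (h : j < u.length) :
    (mealyMap (dbStep A k) (dbOut k) q u).getD j 1 =
      u.getD j 1 * ((List.ofFn q ++ u).getD j 1)⁻¹ := by
  rw [mealyMap_eq, getD_ofFn _ j (by simpa using h)]

lemma ext_lt (q : Fin k → A) (u : List A) (j : ℕ) (h : j < k) :
    (List.ofFn q ++ u).getD j 1 = q ⟨j, h⟩ := by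
  rw [getD_append]
  simp only [List.length_ofFn, h, if_pos]
  exact getD_ofFn q j h 1

lemma ext_ge (q : Fin k → A) (u : List A) (j : ℕ) (h : k ≤ j) :
    (List.ofFn q ++ u).getD j 1 = u.getD (j - k) 1 := by
  rw [getD_append]
  simp [Nat.not_lt_of_le h]

end Stmt16Aux

namespace Stmt16Aux

variable {A : Type*} [Group A] {k : ℕ} [NeZero k]

lemma syn_iff [Fintype A] [DecidableEq A] [Nontrivial A] (u : List A) :
    u ∈ synSet (dbStep A k) ↔ k ≤ u.length := by
  constructor
  · intro h
    by_contra hlt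
    push_neg at hlt
    obtain ⟨a, ha⟩ := exists_ne (1 : A)
    have h1 : dfaRun (dbStep A k) (fun _ => 1) u 0 = (1 : A) := by
      rw [dfaRun_eq]
      simp only [Fin.val_zero, Nat.add_zero]
      rw [ext_lt _ _ _ hlt]
    have h2 : dfaRun (dbStep A k) (fun _ => a) u 0 = a := by
      rw [dfaRun_eq]
      simp only [Fin.val_zero, Nat.add_zero]
      rw [ext_lt _ _ _ hlt]
    have hne : dfaRun (dbStep A k) (fun _ => (1:A)) u ≠ dfaRun (dbStep A k) (fun _ => a) u := by
      intro he
      apply ha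
      rw [← h2, ← he, h1]
    obtain ⟨c, hc⟩ := Finset.card_eq_one.mp h
    have m1 : dfaRun (dbStep A k) (fun _ => (1:A)) u ∈
        Finset.univ.image fun q => dfaRun (dbStep A k) q u := by
      exact Finset.mem_image_of_mem _ (Finset.mem_univ _)
    have m2 : dfaRun (dbStep A k) (fun _ => a) u ∈
        Finset.univ.image fun q => dfaRun (dbStep A k) q u := by
      exact Finset.mem_image_of_mem _ (Finset.mem_univ _)
    rw [hc, Finset.mem_singleton] at m1 m2
    exact hne (m1.trans m2.symm)
  · intro h
    have : (Finset.univ.image fun q : Fin k → A => dfaRun (dbStep A k) q u) =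
        {fun i : Fin k => u.getD (u.length + (i : ℕ) - k) 1} := by
      apply Finset.eq_singleton_iff_unique_mem.mpr
      constructor
      · obtain ⟨q⟩ : Nonempty (Fin k → A) := inferInstance
        refine Finset.mem_image.mpr ⟨q, Finset.mem_univ _, ?_⟩
        rw [dfaRun_eq]
        funext i
        rw [ext_ge _ _ _ (le_trans h (Nat.le_add_right _ _))]
      · intro x hx
        obtain ⟨q, -, hq⟩ := Finset.mem_image.mp hx
        rw [← hq, dfaRun_eq]
        funext i
        rw [ext_ge _ _ _ (le_trans h (Nat.le_add_right _ _))]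
    rw [synSet, Set.mem_setOf_eq, this, Finset.card_singleton]

/-- Explicit inverse for `mealyMap`. -/
def invf [NeZero k] (q : Fin k → A) (w : List A) : ℕ → A
  | j => w.getD j 1 * (if h : j < k then q ⟨j, h⟩ else invf q w (j - k))
  decreasing_by
    have : 0 < k := kpos (k := k)
    omega

lemma mealyMap_surj (q : Fin k → A) (w : List A) :
    mealyMap (dbStep A k) (dbOut k) q (List.ofFn fun i : Fin w.length => invf q w (i : ℕ)) = w := by
  set u : List A := List.ofFn fun i : Fin w.length => invf q w (i : ℕ) with hu
  have hlen : u.length = w.length := by simp [hu]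
  apply List.ext_getElem (by rw [mealyMap_length, hlen])
  intro j h1 h2
  rw [← List.getD_eq_getElem _ 1 h1, ← List.getD_eq_getElem _ 1 h2]
  have hju : j < u.length := by rw [hlen]; exact h2
  rw [mealyMap_getD _ _ _ hju]
  have hgu : ∀ m, m < w.length → u.getD m 1 = invf q w m := by
    intro m hm
    rw [hu, getD_ofFn _ m (by simpa using hm)]
  rw [hgu j h2]
  by_cases hk : j < k
  · rw [ext_lt _ _ _ hk, invf]
    simp [hk]
  · rw [ext_ge _ _ _ (le_of_not_gt hk), hgu (j - k) (by omega)]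
    conv_lhs => rw [invf]
    simp [hk]

end Stmt16Aux

namespace Stmt16Aux

variable {A : Type*} [Group A] {k : ℕ} [NeZero k]

/-- Composite of Mealy transformations, leftmost applied last (outermost). -/
def comp (qs : List (Fin k → A)) (u : List A) : List A :=
  qs.foldr (fun q w => mealyMap (dbStep A k) (dbOut k) q w) u

lemma comp_nil (u : List A) : comp ([] : List (Fin k → A)) u = u := rfl

lemma comp_cons (q : Fin k → A) (qs : List (Fin k → A)) (u : List A) :
    comp (q :: qs) u = mealyMap (dbStep A k) (dbOut k) q (comp qs u) := rfl

lemma comp_append (l₁ l₂ : List (Fin k → A)) (u : List A) :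
    comp (l₁ ++ l₂) u = comp l₁ (comp l₂ u) := by
  simp [comp, List.foldr_append]

lemma comp_length (qs : List (Fin k → A)) (u : List A) :
    (comp qs u).length = u.length := by
  induction qs with
  | nil => rfl
  | cons q qs ih => rw [comp_cons, mealyMap_length, ih]

/-- The abstract per-residue sequence model. -/
def mseq (a : A) : List A → ℕ → A
  | [], t => if t = 0 then a else 1
  | x :: xs, t => if t = 0 then mseq a xs 0 * x⁻¹ else mseq a xs t * (mseq a xs (t - 1))⁻¹

/-- The test input word: `a` at position `r`, identity elsewhere. -/
def eword (a : A) (N r : ℕ) : List A :=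
  List.ofFn (fun i : Fin N => if (i : ℕ) = r then a else 1)

lemma eword_getD (a : A) (N r j : ℕ) (h : j < N) :
    (eword a N r).getD j 1 = if j = r then a else 1 := by
  rw [eword, getD_ofFn _ j (by simpa using h)]

lemma bridge (a : A) (qs : List (Fin k → A)) (r : ℕ) (hr : r < k) (N t : ℕ)
    (hN : t * k + r < N) :
    (comp qs (eword a N r)).getD (t * k + r) 1 =
      mseq a (qs.map fun q => q ⟨r, hr⟩) t := by
  induction qs generalizing t with
  | nil =>
    rw [comp_nil, eword_getD _ _ _ _ hN, List.map_nil, mseq]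
    have h0 : 0 < k := kpos (k := k)
    by_cases ht : t = 0
    · simp [ht]
    · have hne : t * k + r ≠ r := by
        intro h
        have h2 : t * k = 0 := by omega
        rcases Nat.mul_eq_zero.mp h2 with h3 | h3
        · exact ht h3
        · omega
      rw [if_neg hne, if_neg ht]
  | cons q qs ih =>
    rw [comp_cons, List.map_cons]
    have hlen : (comp qs (eword a N r)).length = N := by
      rw [comp_length, eword, List.length_ofFn]
    rw [mealyMap_getD _ _ _ (by rw [hlen]; exact hN)]
    cases t with
    | zero =>
      simp only [Nat.zero_mul, Nat.zero_add] at hN ⊢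
      rw [ext_lt _ _ _ hr, mseq, if_pos rfl]
      have h0 := ih 0 (by simpa using hN)
      simp only [Nat.zero_mul, Nat.zero_add] at h0
      rw [h0]
    | succ s =>
      have hk0 : 0 < k := kpos (k := k)
      have hge : k ≤ (s + 1) * k + r := by nlinarith
      rw [ext_ge _ _ _ hge]
      have hsub : (s + 1) * k + r - k = s * k + r := by
        have : (s + 1) * k = s * k + k := by ring
        omega
      rw [hsub]
      have hsN : s * k + r < N := by nlinarith
      rw [ih (s + 1) hN, ih s hsN, mseq]
      simp

lemma mseq_high (a : A) (xs : List A) (t : ℕ) (h : xs.length < t) : mseq a xs t = 1 := by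
  induction xs generalizing t with
  | nil => rw [mseq, if_neg (by omega)]
  | cons x xs ih =>
    rw [mseq, if_neg (by omega), ih t (by simp at h; omega),
      ih (t - 1) (by simp at h; omega)]
    simp

def eps (a : A) (n : ℕ) : A := if Even n then a else a⁻¹

lemma mseq_diag (a : A) (xs : List A) : mseq a xs xs.length = eps a xs.length := by
  induction xs with
  | nil => simp [mseq, eps]
  | cons x xs ih =>
    rw [List.length_cons, mseq, if_neg (Nat.succ_ne_zero _),
      mseq_high a xs (xs.length + 1) (by omega)]
    simp only [Nat.add_sub_cancel, ih, one_mul]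
    rw [eps, eps]
    by_cases h : Even xs.length
    · rw [if_pos h, if_neg (by simp [Nat.even_add_one, h])]
    · rw [if_neg h, if_pos (by simp [Nat.even_add_one, h]), inv_inv]

end Stmt16Aux

namespace Stmt16Aux

variable {A : Type*} [Group A] {k : ℕ} [NeZero k]

def phi (a : A) : ℕ → A → A
  | 0, y => a * y⁻¹
  | n + 1, y => eps a (n + 1) * (phi a n y)⁻¹

lemma phi_zero (a y : A) : phi a 0 y = a * y⁻¹ := rfl

lemma phi_succ (a y : A) (n : ℕ) : phi a (n + 1) y = eps a (n + 1) * (phi a n y)⁻¹ := rfl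

lemma mseq_concat (a : A) (xs : List A) (y : A) :
    mseq a (xs ++ [y]) xs.length = phi a xs.length y := by
  induction xs with
  | nil =>
    show mseq a (y :: []) 0 = _
    rw [mseq, if_pos rfl, mseq, if_pos rfl, List.length_nil, phi_zero]
  | cons x xs ih =>
    show mseq a (x :: (xs ++ [y])) (xs.length + 1) = _
    rw [mseq, if_neg (Nat.succ_ne_zero _), Nat.add_sub_cancel, ih]
    have hl : (xs ++ [y]).length = xs.length + 1 := by simp
    rw [show mseq a (xs ++ [y]) (xs.length + 1) = eps a (xs.length + 1) by
      rw [← hl, mseq_diag, hl]]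
    rw [List.length_cons, phi_succ]

lemma phi_inj (a : A) (n : ℕ) (y y' : A) (h : phi a n y = phi a n y') : y = y' := by
  induction n with
  | zero =>
    rw [phi_zero, phi_zero] at h
    exact inv_injective (mul_left_cancel h)
  | succ n ih =>
    rw [phi_succ, phi_succ] at h
    exact ih (inv_injective (mul_left_cancel h))

lemma eps_ne_one (a : A) (ha : a ≠ 1) (n : ℕ) : eps a n ≠ 1 := by
  rw [eps]
  split
  · exact ha
  · simpa using ha

lemma comp_len_eq {A : Type*} [Group A] [Nontrivial A] {k : ℕ} [NeZero k]
    (qs ps : List (Fin k → A)) (h : comp qs = comp ps) : qs.length = ps.length := by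
  obtain ⟨a, ha⟩ := exists_ne (1 : A)
  by_contra hne
  wlog hlt : qs.length < ps.length generalizing qs ps
  · exact this ps qs h.symm (Ne.symm hne) (by omega)
  have h0 : (0 : ℕ) < k := kpos (k := k)
  set N := ps.length * k + k with hNdef
  have hN : ps.length * k + 0 < N := by omega
  have e1 := bridge a qs 0 h0 N ps.length hN
  have e2 := bridge a ps 0 h0 N ps.length hN
  rw [h] at e1
  rw [e1, mseq_high a _ _ (by simpa using hlt)] at e2
  have := mseq_diag a (ps.map fun q => q ⟨0, h0⟩)
  rw [List.length_map] at this
  rw [this] at e2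
  exact eps_ne_one a ha ps.length e2.symm

lemma comp_inj {A : Type*} [Group A] [Nontrivial A] {k : ℕ} [NeZero k]
    (n : ℕ) : ∀ qs ps : List (Fin k → A), qs.length = n → ps.length = n →
    comp qs = comp ps → qs = ps := by
  obtain ⟨a, ha⟩ := exists_ne (1 : A)
  induction n with
  | zero =>
    intro qs ps h1 h2 _
    rw [List.length_eq_zero_iff.mp h1, List.length_eq_zero_iff.mp h2]
  | succ n ih =>
    intro qs ps h1 h2 h
    rcases List.eq_nil_or_concat qs with rfl | ⟨qs', q, rfl⟩
    · simp at h1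
    rcases List.eq_nil_or_concat ps with rfl | ⟨ps', p, rfl⟩
    · simp at h2
    simp only [List.concat_eq_append] at h1 h2 h ⊢
    have hq1 : qs'.length = n := by simp at h1; omega
    have hq2 : ps'.length = n := by simp at h2; omega
    -- recover the last element
    have hqp : q = p := by
      funext i
      have hr : (i : ℕ) < k := i.2
      set N := n * k + k with hNdef
      have hN : n * k + (i : ℕ) < N := by omega
      have e1 := bridge a (qs' ++ [q]) (i : ℕ) hr N n hN
      have e2 := bridge a (ps' ++ [p]) (i : ℕ) hr N n hN
      rw [h] at e1
      rw [e1] at e2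
      rw [List.map_append, List.map_append] at e2
      simp only [List.map_cons, List.map_nil] at e2
      rw [show n = (qs'.map fun q => q ⟨(i:ℕ), hr⟩).length by simp [hq1]] at e2
      rw [mseq_concat] at e2
      rw [show (qs'.map fun q => q ⟨(i:ℕ), hr⟩).length
          = (ps'.map fun q => q ⟨(i:ℕ), hr⟩).length by simp [hq1, hq2]] at e2
      rw [mseq_concat] at e2
      simp only [List.length_map, hq1, hq2] at e2
      have := phi_inj a n _ _ e2
      simpa [Fin.eta] using this
    subst hqp
    -- cancel the last factor using surjectivity
    have hcc : comp qs' = comp ps' := by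
      funext w
      have hw := congrFun h (List.ofFn fun i : Fin w.length => invf q w (i : ℕ))
      rw [comp_append, comp_append] at hw
      simp only [comp_cons, comp_nil] at hw
      rw [mealyMap_surj q w] at hw
      exact hw
    rw [ih qs' ps' hq1 hq2 hcc]

end Stmt16Aux



open Stmt16Aux in
/-- The Mealy automaton `M(B_k(A), χ_k(A))` is an invertible reset Mealy automaton with
pairwise distinct modified state functions; in particular `q ∘ v ≠ q' ∘ v` for distinct
states `q ≠ q'` and `v ∈ A^k`, and the generated semigroup is free. -/
theorem stmt16 {A : Type*} [Group A] [Fintype A] [DecidableEq A] [Nontrivial A]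
    (k : ℕ) [NeZero k] :
    (∀ q : Fin k → A, Function.Bijective (dbOut k q)) ∧
    (∀ q : Fin k → A, ∀ u ∈ synSet (dbStep A k),
      mealyMap (dbStep A k) (dbOut k) q u ∈ synSet (dbStep A k)) ∧
    (∀ q q' : Fin k → A, q ≠ q' → ∃ u ∈ synSet (dbStep A k),
      ∃ p : Fin k → A, dfaRun (dbStep A k) p (mealyMap (dbStep A k) (dbOut k) q u) ≠
        dfaRun (dbStep A k) p (mealyMap (dbStep A k) (dbOut k) q' u)) ∧
    (∀ q q' : Fin k → A, q ≠ q' → ∀ v : Fin k → A,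
      mealyMap (dbStep A k) (dbOut k) q (List.ofFn v) ≠
        mealyMap (dbStep A k) (dbOut k) q' (List.ofFn v)) ∧
    Function.Injective
      ⇑(FreeSemigroup.lift
        (fun q : Fin k → A => (mealyMap (dbStep A k) (dbOut k) q : Function.End (List A))) :
          FreeSemigroup (Fin k → A) →ₙ* Function.End (List A)) := by
  have hk0 : 0 < k := kpos (k := k)
  -- part 4 first, reused in part 3
  have part4 : ∀ q q' : Fin k → A, q ≠ q' → ∀ v : Fin k → A,
      mealyMap (dbStep A k) (dbOut k) q (List.ofFn v) ≠
        mealyMap (dbStep A k) (dbOut k) q' (List.ofFn v) := by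
    intro q q' hne v hcon
    apply hne
    funext i
    have hi : (i : ℕ) < (List.ofFn v).length := by simpa using i.2
    have := congrArg (fun l => l.getD (i : ℕ) 1) hcon
    rw [mealyMap_getD _ _ _ hi, mealyMap_getD _ _ _ hi,
      ext_lt q _ _ i.2, ext_lt q' _ _ i.2] at this
    have := inv_injective (mul_left_cancel this)
    simpa [Fin.eta] using this
  refine ⟨?_, ?_, ?_, part4, ?_⟩
  · -- invertibility
    intro q
    exact (Equiv.mulRight (q 0)⁻¹).bijective
  · -- reset words preserved
    intro q u hu
    rw [syn_iff] at hu ⊢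
    rw [mealyMap_length]
    exact hu
  · -- distinct modified state functions
    intro q q' hne
    refine ⟨List.ofFn (fun _ : Fin k => (1 : A)), ?_, fun _ => 1, ?_⟩
    · rw [syn_iff]; simp
    · intro hcon
      apply part4 q q' hne (fun _ => 1)
      set w := mealyMap (dbStep A k) (dbOut k) q (List.ofFn fun _ : Fin k => (1:A)) with hw
      set w' := mealyMap (dbStep A k) (dbOut k) q' (List.ofFn fun _ : Fin k => (1:A)) with hw'
      have hlw : w.length = k := by rw [hw, mealyMap_length]; simp
      have hlw' : w'.length = k := by rw [hw', mealyMap_length]; simp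
      apply List.ext_getElem (by rw [hlw, hlw'])
      intro m h1 h2
      have hm : m < k := by rw [← hlw]; exact h1
      have := congrFun hcon ⟨m, hm⟩
      rw [dfaRun_eq, dfaRun_eq] at hcon
      have h3 := congrFun hcon ⟨m, hm⟩
      simp only at h3
      rw [ext_ge _ _ _ (by omega), ext_ge _ _ _ (by omega)] at h3
      rw [hlw, hlw'] at h3
      have hidx : k + m - k = m := by omega
      rw [hidx] at h3
      rw [← List.getD_eq_getElem _ 1 h1, ← List.getD_eq_getElem _ 1 h2]
      exact h3
  · -- freeness
    set f : (Fin k → A) → Function.End (List A) :=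
      fun q => (mealyMap (dbStep A k) (dbOut k) q : Function.End (List A)) with hf
    have hl : ∀ s : FreeSemigroup (Fin k → A),
        (FreeSemigroup.lift f s : List A → List A) = comp (s.head :: s.tail) := by
      intro s
      refine FreeSemigroup.recOnMul s (fun x => ?_) (fun x y ihx ihy => ?_)
      · rw [FreeSemigroup.lift_of]; rfl
      · funext u
        have hmul : (FreeSemigroup.lift f) (FreeSemigroup.of x * y) u
            = (FreeSemigroup.lift f) (FreeSemigroup.of x)
              ((FreeSemigroup.lift f) y u) := by
          rw [map_mul]; rfl
        rw [hmul, ihx, ihy]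
        rfl
    intro s t hst
    have h : comp (s.head :: s.tail) = comp (t.head :: t.tail) := by
      rw [← hl s, ← hl t, hst]
    have hlen := comp_len_eq _ _ h
    simp only [List.length_cons] at hlen
    have := comp_inj (s.tail.length + 1) (s.head :: s.tail) (t.head :: t.tail)
      (by simp) (by simp [← hlen]) h
    obtain ⟨sh, st⟩ := s
    obtain ⟨th, tt⟩ := t
    simp only [List.cons.injEq] at this
    simp [FreeSemigroup.ext_iff] at *
    exact this
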